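/- An abelian group G is residually finite (i.e., embeds into a product of finite abelian groups) if and only if its first Ulm subgroup G¹ = ⋂_{m ≥ 1} mG is trivial. -/

import Mathlib

/-- The subgroup mG = {m•x : x ∈ G} of an abelian group G. -/
def nsmulRange (G : Type*) [AddCommGroup G] (m : ℕ) : AddSubgroup G :=
  (m • AddMonoidHom.id G).range

/-- The first Ulm subgroup G¹ = ⋂_{m ≥ 1} mG. -/
def ulm (G : Type*) [AddCommGroup G] : AddSubgroup G :=
  ⨅ m ∈ Set.Ioi (0 : ℕ), nsmulRange G m

/-- The m-torsion subgroup of the rational circle. -/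
def torsK (m : ℕ) : AddSubgroup (AddCircle (1 : ℚ)) :=
  (m • AddMonoidHom.id (AddCircle (1 : ℚ))).ker

lemma mem_torsK {m : ℕ} {u : AddCircle (1 : ℚ)} : u ∈ torsK m ↔ m • u = 0 := Iff.rfl

lemma torsK_finite {m : ℕ} (hm : 0 < m) : Finite (torsK m) := by
  haveI : Fact ((0 : ℚ) < 1) := ⟨one_pos⟩
  have hsub : (torsK m : Set (AddCircle (1 : ℚ))) ⊆
      ⋃ d ∈ m.divisors, {u : AddCircle (1 : ℚ) | addOrderOf u = d} := by
    intro u hu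
    have hd : addOrderOf u ∣ m := addOrderOf_dvd_of_nsmul_eq_zero (mem_torsK.mp hu)
    simp only [Set.mem_iUnion, Set.mem_setOf_eq]
    exact ⟨addOrderOf u, Nat.mem_divisors.2 ⟨hd, hm.ne'⟩, rfl⟩
  have hfin : ((torsK m : Set (AddCircle (1 : ℚ)))).Finite := by
    refine Set.Finite.subset ?_ hsub
    refine Set.Finite.biUnion (m.divisors : Finset ℕ).finite_toSet ?_
    intro d hd
    exact AddCircle.finite_setOf_addOrderOf_eq (1 : ℚ) (Nat.pos_of_mem_divisors (by simpa using hd))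
  exact hfin.to_subtype

/-- G is residually finite (embeds into a product of finite abelian groups) iff G¹ = 0. -/
theorem residuallyFinite_iff_ulm_eq_bot (G : Type) [AddCommGroup G] :
    (∃ (ι : Type) (F : ι → AddCommGrpCat), (∀ i, Finite (F i)) ∧
      ∃ f : G →+ (∀ i, F i), Function.Injective f) ↔ ulm G = ⊥ := by
  constructor
  · rintro ⟨ι, F, hF, f, hf⟩
    rw [eq_bot_iff]
    intro x hx
    simp only [ulm, AddSubgroup.mem_iInf, Set.mem_Ioi] at hx
    rw [AddSubgroup.mem_bot]
    apply hf
    rw [map_zero]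
    funext i
    haveI := hF i
    obtain ⟨y, hy⟩ := hx (Nat.card (F i)) Nat.card_pos
    have hxy : x = (Nat.card (F i)) • y := by
      simpa [nsmulRange] using hy.symm
    calc f x i = (Nat.card (F i)) • (f y i) := by rw [hxy, map_nsmul]; rfl
    _ = 0 := card_nsmul_eq_zero'
  · intro hU
    classical
    have key : ∀ x : {x : G // x ≠ 0}, ∃ m : ℕ, 0 < m ∧ x.1 ∉ nsmulRange G m := by
      rintro ⟨x, hx⟩
      by_contra h
      push_neg at h
      apply hx
      have hmem : x ∈ ulm G := by
        simp only [ulm, AddSubgroup.mem_iInf, Set.mem_Ioi]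
        exact fun m hm => h m hm
      rw [hU, AddSubgroup.mem_bot] at hmem
      exact hmem
    choose m hm hxm using key
    have hc : ∀ x : {x : G // x ≠ 0}, ∃ c : CharacterModule (G ⧸ nsmulRange G (m x)),
        c (QuotientAddGroup.mk x.1) ≠ 0 := by
      intro x
      apply CharacterModule.exists_character_apply_ne_zero_of_ne_zero
      rw [Ne, QuotientAddGroup.eq_zero_iff]
      exact hxm x
    choose c hc using hc
    refine ⟨{x : G // x ≠ 0}, fun x => AddCommGrpCat.of (ULift ↥(torsK (m x))), fun x => by have := torsK_finite (hm x); exact inferInstanceAs (Finite (ULift _)),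
      ?_⟩
    have hmem : ∀ (g : G) (x : {x : G // x ≠ 0}),
        (c x (QuotientAddGroup.mk g) : AddCircle (1 : ℚ)) ∈ torsK (m x) := by
      intro g x
      rw [mem_torsK, ← map_nsmul, ← QuotientAddGroup.mk_nsmul]
      have : (m x) • g ∈ nsmulRange G (m x) := ⟨g, rfl⟩
      rw [(QuotientAddGroup.eq_zero_iff _).2 this, map_zero]
    refine ⟨AddMonoidHom.mk' (fun g x => ULift.up ⟨c x (QuotientAddGroup.mk g), hmem g x⟩) ?_, ?_⟩
    · intro a b
      funext x
      refine ULift.ext _ _ (Subtype.ext ?_)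
      show (c x) (((a + b : G) : G ⧸ nsmulRange G (m x))) =
        ((c x) ((a : G ⧸ nsmulRange G (m x)))) + ((c x) ((b : G ⧸ nsmulRange G (m x))))
      rw [← map_add]
      rfl
    · rw [injective_iff_map_eq_zero]
      intro a ha
      by_contra h
      have := congrFun ha ⟨a, h⟩
      rw [Pi.zero_apply] at this
      rw [ULift.ext_iff, Subtype.ext_iff] at this
      exact hc ⟨a, h⟩ this
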